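/- Let m ≥ 2, 1 ≤ t < m, ρ ≥ 1, n ≥ ρ+1, and let A_x ⊆ Z_m^n be as in the model construction. Given x ∈ Z_m^n and 1 ≤ i ≤ ρ, among the i-th coordinates of elements of A_x ∪ {x}, every value of Z_m appears exactly t·m^{ρ−1} times; in A_x, every value appears t·m^{ρ−1} times except the i-th coordinate of x, which appears t·m^{ρ−1} − 1 times. -/
import Mathlib


/-- The model construction in `(ℤ/m)^n`: first `ρ` coordinates free, coordinate `ρ+1`
(0-indexed: `ρ`) shifted by `0, ..., t-1`, remaining coordinates fixed, and `x` removed. -/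
def modelA (m n ρ t : ℕ) [NeZero m] (hρ : ρ < n) (x : Fin n → ZMod m) :
    Finset (Fin n → ZMod m) :=
  ((Finset.univ : Finset (Fin n → ZMod m)).filter fun z =>
    (∀ j : Fin n, ρ < (j : ℕ) → z j = x j) ∧
    ∃ i : Fin t, z ⟨ρ, hρ⟩ = x ⟨ρ, hρ⟩ + ((i : ℕ) : ZMod m)).erase x

/-- for `1 ≤ i ≤ ρ` (0-indexed: `(i : ℕ) < ρ`), among the `i`-th coordinates
of elements of `A_x ∪ {x}` every value of `ℤ/m` appears exactly `t·m^(ρ−1)` times; in `A_x`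
every value appears `t·m^(ρ−1)` times except `x i`, which appears `t·m^(ρ−1) − 1` times. -/
theorem stmt_18 (m n ρ t : ℕ) [NeZero m] (hm : 2 ≤ m) (ht : 1 ≤ t) (htm : t < m)
    (hρ1 : 1 ≤ ρ) (hρ : ρ < n) (x : Fin n → ZMod m) (i : Fin n) (hi : (i : ℕ) < ρ) :
    ∀ v : ZMod m,
      (((modelA m n ρ t hρ x ∪ {x}).filter fun z => z i = v).card = t * m ^ (ρ - 1)) ∧
      (((modelA m n ρ t hρ x).filter fun z => z i = v).card =
        if v = x i then t * m ^ (ρ - 1) - 1 else t * m ^ (ρ - 1)) := by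
  classical
  set S : Finset (Fin n → ZMod m) :=
    (Finset.univ : Finset (Fin n → ZMod m)).filter fun z =>
      (∀ j : Fin n, ρ < (j : ℕ) → z j = x j) ∧
      ∃ c : Fin t, z ⟨ρ, hρ⟩ = x ⟨ρ, hρ⟩ + ((c : ℕ) : ZMod m) with hSdef
  have hxS : x ∈ S := by
    rw [hSdef, Finset.mem_filter]
    exact ⟨Finset.mem_univ _, fun j _ => rfl, ⟨⟨0, ht⟩, by simp⟩⟩
  -- the injection from parameters
  have hcardS : S.card = t * m ^ ρ := by
    set f : (Fin ρ → ZMod m) × Fin t → (Fin n → ZMod m) :=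
      fun p j => if h : (j : ℕ) < ρ then p.1 ⟨j, h⟩
        else if (j : ℕ) = ρ then x ⟨ρ, hρ⟩ + ((p.2 : ℕ) : ZMod m) else x j with hfdef
    have hinj : Function.Injective f := by
      intro p q h
      have h1 : p.1 = q.1 := by
        funext l
        have := congrFun h ⟨(l : ℕ), lt_trans l.2 hρ⟩
        simpa [hfdef, l.2] using this
      have h2 : p.2 = q.2 := by
        have := congrFun h ⟨ρ, hρ⟩
        simp [hfdef] at this
        have hv : ((p.2 : ℕ) : ZMod m).val = ((q.2 : ℕ) : ZMod m).val := by rw [this]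
        rw [ZMod.val_cast_of_lt (lt_trans p.2.2 htm),
          ZMod.val_cast_of_lt (lt_trans q.2.2 htm)] at hv
        exact Fin.ext hv
      exact Prod.ext h1 h2
    have himg : Finset.image f Finset.univ = S := by
      apply Finset.ext
      intro z
      simp only [Finset.mem_image, Finset.mem_univ, true_and, hSdef, Finset.mem_filter]
      constructor
      · rintro ⟨p, rfl⟩
        refine ⟨fun j hj => ?_, ⟨p.2, ?_⟩⟩
        · simp [hfdef, Nat.lt_asymm hj, Nat.ne_of_gt hj]
        · simp [hfdef]
      · rintro ⟨h1, c, h2⟩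
        refine ⟨⟨fun l => z ⟨(l : ℕ), lt_trans l.2 hρ⟩, c⟩, ?_⟩
        funext j
        by_cases hj : (j : ℕ) < ρ
        · simp [hfdef, hj]
        · by_cases hj2 : (j : ℕ) = ρ
          · have : j = ⟨ρ, hρ⟩ := Fin.ext hj2
            subst this
            simp [hfdef, h2.symm]
          · have hgt : ρ < (j : ℕ) := lt_of_le_of_ne (not_lt.mp hj) (Ne.symm hj2)
            simp [hfdef, hj, hj2, h1 j hgt]
    rw [← himg, Finset.card_image_of_injective _ hinj, Finset.card_univ,
      Fintype.card_prod, Fintype.card_fun, ZMod.card, Fintype.card_fin,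
      Fintype.card_fin, mul_comm]
  -- translation invariance of fibers
  have hfiber : ∀ v w : ZMod m,
      (S.filter fun z => z i = v).card = (S.filter fun z => z i = w).card := by
    intro v w
    apply Finset.card_bij' (fun z _ => Function.update z i w)
      (fun z _ => Function.update z i v)
    · intro z hz
      simp only [Finset.mem_filter] at hz
      rw [Function.update_idem, ← hz.2, Function.update_eq_self]
    · intro z hz
      simp only [Finset.mem_filter] at hz
      rw [Function.update_idem, ← hz.2, Function.update_eq_self]
    · intro z hz
      simp only [Finset.mem_filter] at hz ⊢
      obtain ⟨hzS, hzi⟩ := hz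
      rw [hSdef, Finset.mem_filter] at hzS ⊢
      obtain ⟨-, h1, c, h2⟩ := hzS
      have hne : ∀ j : Fin n, ¬ (j : ℕ) < ρ → Function.update z i w j = z j := by
        intro j hj
        apply Function.update_of_ne
        intro hji
        exact hj (hji ▸ hi)
      refine ⟨⟨Finset.mem_univ _, fun j hj => ?_, ⟨c, ?_⟩⟩, ?_⟩
      · rw [hne j (Nat.lt_asymm hj)]; exact h1 j hj
      · rw [hne ⟨ρ, hρ⟩ (by simp)]; exact h2
      · simp
    · intro z hz
      simp only [Finset.mem_filter] at hz ⊢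
      obtain ⟨hzS, hzi⟩ := hz
      rw [hSdef, Finset.mem_filter] at hzS ⊢
      obtain ⟨-, h1, c, h2⟩ := hzS
      have hne : ∀ j : Fin n, ¬ (j : ℕ) < ρ → Function.update z i v j = z j := by
        intro j hj
        apply Function.update_of_ne
        intro hji
        exact hj (hji ▸ hi)
      refine ⟨⟨Finset.mem_univ _, fun j hj => ?_, ⟨c, ?_⟩⟩, ?_⟩
      · rw [hne j (Nat.lt_asymm hj)]; exact h1 j hj
      · rw [hne ⟨ρ, hρ⟩ (by simp)]; exact h2
      · simp
  have hsum : ∑ v : ZMod m, (S.filter fun z => z i = v).card = S.card :=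
    (Finset.card_eq_sum_card_fiberwise (fun z _ => Finset.mem_univ (z i))).symm
  have hc : ∀ v : ZMod m, (S.filter fun z => z i = v).card = t * m ^ (ρ - 1) := by
    intro v
    have hconst : ∑ w : ZMod m, (S.filter fun z => z i = w).card
        = m * (S.filter fun z => z i = v).card := by
      rw [Finset.sum_congr rfl (fun w _ => hfiber w v), Finset.sum_const,
        Finset.card_univ, ZMod.card, smul_eq_mul]
    have : m * (S.filter fun z => z i = v).card = m * (t * m ^ (ρ - 1)) := by
      rw [← hconst, hsum, hcardS]
      have : m ^ ρ = m * m ^ (ρ - 1) := by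
        rw [← pow_succ', Nat.sub_add_cancel hρ1]
      rw [this]; ring
    exact Nat.eq_of_mul_eq_mul_left (Nat.pos_of_ne_zero (NeZero.ne m)) this
  intro v
  have hA : modelA m n ρ t hρ x = S.erase x := rfl
  have hU : modelA m n ρ t hρ x ∪ {x} = S := by
    rw [hA, Finset.union_comm, ← Finset.insert_eq, Finset.insert_erase hxS]
  constructor
  · rw [hU]; exact hc v
  · rw [hA, Finset.filter_erase]
    by_cases hv : v = x i
    · rw [if_pos hv]
      have hxmem : x ∈ S.filter fun z => z i = v :=
        Finset.mem_filter.mpr ⟨hxS, hv.symm⟩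
      rw [Finset.card_erase_of_mem hxmem, hc v]
    · rw [if_neg hv]
      have hxnot : x ∉ S.filter fun z => z i = v := by
        rw [Finset.mem_filter]
        rintro ⟨-, h⟩
        exact hv h.symm
      rw [Finset.erase_eq_of_notMem hxnot, hc v]
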